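/- Let E be a finite-dimensional real inner product space, let L ≥ 0, and let F : E → ℝ be a differentiable function whose gradient ∇F is L-Lipschitz. Let 0 ≤ λ < 1 and let z, Φ, m, δ ∈ E be vectors satisfying z − Φ = (λ²/(1−λ)) m, and set z' := z + (1/(1−λ)) δ. Then F(z') ≤ F(z) + (1/(1−λ)) ⟨∇F(Φ), δ⟩ + (L/(2(1−λ))) ‖m‖² + ( L/(2(1−λ)³) + L/(2(1−λ)²) ) ‖δ‖². -/

import Mathlib

open Finset
open scoped RealInnerProductSpace

/-- Descent lemma for functions with Lipschitz gradient. -/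
lemma descent_lemma_aux
    {E : Type*} [NormedAddCommGroup E] [InnerProductSpace ℝ E]
    [FiniteDimensional ℝ E]
    (L : ℝ) (hL : 0 ≤ L) (F : E → ℝ)
    (hdiff : Differentiable ℝ F)
    (hlip : ∀ x y : E, ‖gradient F x - gradient F y‖ ≤ L * ‖x - y‖)
    (x u : E) :
    F (x + u) ≤ F x + ⟪gradient F x, u⟫ + L / 2 * ‖u‖ ^ 2 := by
  have hgradcont : Continuous (fun y => gradient F y) := by
    refine (LipschitzWith.of_dist_le_mul (K := ⟨L, hL⟩) ?_).continuous
    intro a b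
    rw [dist_eq_norm, dist_eq_norm]; exact hlip a b
  have hg : ∀ t : ℝ, HasDerivAt (fun t : ℝ => F (x + t • u))
      ⟪gradient F (x + t • u), u⟫ t := by
    intro t
    have hline : HasDerivAt (fun t : ℝ => x + t • u) u t := by
      simpa using ((hasDerivAt_id t).smul_const u).const_add x
    have hF := ((hdiff (x + t • u)).hasGradientAt).hasFDerivAt
    have := hF.comp_hasDerivAt t hline
    simpa [InnerProductSpace.toDual_apply_apply, Function.comp_def] using this
  have hcont : Continuous fun t : ℝ => ⟪gradient F (x + t • u), u⟫ := by
    apply Continuous.inner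
    · exact hgradcont.comp (by continuity)
    · exact continuous_const
  have hFTC : (∫ t in (0:ℝ)..1, ⟪gradient F (x + t • u), u⟫)
      = F (x + u) - F x := by
    have := intervalIntegral.integral_eq_sub_of_hasDerivAt
      (f := fun t : ℝ => F (x + t • u))
      (f' := fun t : ℝ => ⟪gradient F (x + t • u), u⟫)
      (a := 0) (b := 1) (fun t _ => hg t) (hcont.intervalIntegrable 0 1)
    simpa using this
  have hbound : (∫ t in (0:ℝ)..1, ⟪gradient F (x + t • u), u⟫)
      ≤ ∫ t in (0:ℝ)..1, (⟪gradient F x, u⟫ + L * t * ‖u‖ ^ 2) := by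
    apply intervalIntegral.integral_mono_on (by norm_num)
      (hcont.intervalIntegrable 0 1)
      ((by continuity : Continuous fun t : ℝ =>
        (⟪gradient F x, u⟫ + L * t * ‖u‖ ^ 2)).intervalIntegrable 0 1)
    intro t ht
    have h1 : ⟪gradient F (x + t • u) - gradient F x, u⟫
        ≤ ‖gradient F (x + t • u) - gradient F x‖ * ‖u‖ :=
      real_inner_le_norm _ _
    have h2 : ‖gradient F (x + t • u) - gradient F x‖ ≤ L * (t * ‖u‖) := by
      have := hlip (x + t • u) x
      simpa [norm_smul, abs_of_nonneg ht.1] using this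
    have h3 : ⟪gradient F (x + t • u) - gradient F x, u⟫
        ≤ L * t * ‖u‖ ^ 2 := by
      calc ⟪gradient F (x + t • u) - gradient F x, u⟫
          ≤ ‖gradient F (x + t • u) - gradient F x‖ * ‖u‖ := h1
        _ ≤ L * (t * ‖u‖) * ‖u‖ :=
            mul_le_mul_of_nonneg_right h2 (norm_nonneg u)
        _ = L * t * ‖u‖ ^ 2 := by ring
    have := inner_sub_left (𝕜 := ℝ) (gradient F (x + t • u)) (gradient F x) u
    linarith [h3, this.symm.le, this.le]
  have hval : (∫ t in (0:ℝ)..1, (⟪gradient F x, u⟫ + L * t * ‖u‖ ^ 2))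
      = ⟪gradient F x, u⟫ + L / 2 * ‖u‖ ^ 2 := by
    rw [intervalIntegral.integral_add (intervalIntegrable_const)
      (((by continuity : Continuous fun t : ℝ => L * t * ‖u‖ ^ 2)).intervalIntegrable 0 1)]
    have h1 : (fun t : ℝ => L * t * ‖u‖ ^ 2) = fun t : ℝ => (L * ‖u‖ ^ 2) * t := by
      funext t; ring
    rw [h1, intervalIntegral.integral_const_mul, integral_id]
    simp
    ring
  have := hFTC ▸ (hval ▸ hbound)
  linarith

/-- Per-round descent inequality of the FedNSAM convergence proof: if `F` is
differentiable with `L`-Lipschitz gradient, `0 ≤ λ < 1`,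
`z − Φ = (λ²/(1−λ)) m` and `z' = z + (1/(1−λ)) δ`, then
`F(z') ≤ F(z) + (1/(1−λ))⟨∇F(Φ), δ⟩ + (L/(2(1−λ)))‖m‖²
        + (L/(2(1−λ)³) + L/(2(1−λ)²))‖δ‖²`. -/
theorem fednsam_descent_inequality
    {E : Type*} [NormedAddCommGroup E] [InnerProductSpace ℝ E]
    [FiniteDimensional ℝ E]
    (L : ℝ) (hL : 0 ≤ L) (F : E → ℝ)
    (hdiff : Differentiable ℝ F)
    (hlip : ∀ x y : E, ‖gradient F x - gradient F y‖ ≤ L * ‖x - y‖)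
    (l : ℝ) (hl0 : 0 ≤ l) (hl1 : l < 1)
    (z Φ m δ : E) (hzΦ : z - Φ = (l ^ 2 / (1 - l)) • m) :
    F (z + (1 / (1 - l)) • δ) ≤
      F z + (1 / (1 - l)) * ⟪gradient F Φ, δ⟫ +
        (L / (2 * (1 - l))) * ‖m‖ ^ 2 +
        (L / (2 * (1 - l) ^ 3) + L / (2 * (1 - l) ^ 2)) * ‖δ‖ ^ 2 := by
  have ht : (0:ℝ) < 1 - l := by linarith
  set u : E := (1 / (1 - l)) • δ with hu
  have hdesc := descent_lemma_aux L hL F hdiff hlip z u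
  -- inner product decomposition
  have hinner : ⟪gradient F z, u⟫
      = ⟪gradient F Φ, u⟫ + ⟪gradient F z - gradient F Φ, u⟫ := by
    rw [inner_sub_left]; ring
  have hcs : ⟪gradient F z - gradient F Φ, u⟫
      ≤ (L * ‖z - Φ‖) * ‖u‖ := by
    calc ⟪gradient F z - gradient F Φ, u⟫
        ≤ ‖gradient F z - gradient F Φ‖ * ‖u‖ := real_inner_le_norm _ _
      _ ≤ (L * ‖z - Φ‖) * ‖u‖ :=
          mul_le_mul_of_nonneg_right (hlip z Φ) (norm_nonneg u)
  have hnormzΦ : ‖z - Φ‖ = (l ^ 2 / (1 - l)) * ‖m‖ := by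
    rw [hzΦ, norm_smul, Real.norm_eq_abs,
      abs_of_nonneg (by positivity : (0:ℝ) ≤ l ^ 2 / (1 - l))]
  have hnormu : ‖u‖ = (1 / (1 - l)) * ‖δ‖ := by
    rw [hu, norm_smul, Real.norm_eq_abs, abs_of_nonneg (by positivity)]
  have hinnu : ⟪gradient F Φ, u⟫ = (1 / (1 - l)) * ⟪gradient F Φ, δ⟫ := by
    rw [hu, real_inner_smul_right]
  -- key scalar inequality
  have hkey : (L * ((l ^ 2 / (1 - l)) * ‖m‖)) * ((1 / (1 - l)) * ‖δ‖)
        + L / 2 * ((1 / (1 - l)) * ‖δ‖) ^ 2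
      ≤ (L / (2 * (1 - l))) * ‖m‖ ^ 2 +
        (L / (2 * (1 - l) ^ 3) + L / (2 * (1 - l) ^ 2)) * ‖δ‖ ^ 2 := by
    have hm := norm_nonneg m
    have hd := norm_nonneg δ
    have ht3 : (0:ℝ) < (1 - l) ^ 3 := by positivity
    have hl2 : (0:ℝ) ≤ 1 - l ^ 2 := by nlinarith
    have h2 : 2 * L * l ^ 2 * ‖m‖ * ‖δ‖ * (1 - l)
        ≤ L * (1 - l) ^ 2 * ‖m‖ ^ 2 + L * ‖δ‖ ^ 2 := by
      nlinarith [sq_nonneg ((1 - l) * ‖m‖ - ‖δ‖),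
        mul_nonneg (mul_nonneg (mul_nonneg (mul_nonneg hL hm) hd) ht.le) hl2,
        mul_nonneg (mul_nonneg hL hm) hd]
    have heq : ((L / (2 * (1 - l))) * ‖m‖ ^ 2 +
          (L / (2 * (1 - l) ^ 3) + L / (2 * (1 - l) ^ 2)) * ‖δ‖ ^ 2)
        - ((L * ((l ^ 2 / (1 - l)) * ‖m‖)) * ((1 / (1 - l)) * ‖δ‖)
          + L / 2 * ((1 / (1 - l)) * ‖δ‖) ^ 2)
        = (L * (1 - l) ^ 2 * ‖m‖ ^ 2 + L * ‖δ‖ ^ 2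
            - 2 * L * l ^ 2 * ‖m‖ * ‖δ‖ * (1 - l)) / (2 * (1 - l) ^ 3) := by
      field_simp
      ring
    have hnn := div_nonneg (by linarith : (0:ℝ) ≤ L * (1 - l) ^ 2 * ‖m‖ ^ 2
        + L * ‖δ‖ ^ 2 - 2 * L * l ^ 2 * ‖m‖ * ‖δ‖ * (1 - l))
      (by positivity : (0:ℝ) ≤ 2 * (1 - l) ^ 3)
    linarith [heq ▸ hnn]
  calc F (z + u) ≤ F z + ⟪gradient F z, u⟫ + L / 2 * ‖u‖ ^ 2 := hdesc
    _ ≤ F z + (1 / (1 - l)) * ⟪gradient F Φ, δ⟫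
        + ((L * ((l ^ 2 / (1 - l)) * ‖m‖)) * ((1 / (1 - l)) * ‖δ‖)
          + L / 2 * ((1 / (1 - l)) * ‖δ‖) ^ 2) := by
        rw [hinner, hinnu]
        have := hcs
        rw [hnormzΦ, hnormu] at this
        rw [hnormu]
        linarith
    _ ≤ _ := by linarith [hkey]
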